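/- The set of real numbers of VC dimension at most d is uncountable if and only if d ≥ 2. -/

import Mathlib

/-- The family of subsets of `ℕ` arising from finite contiguous substrings of `S`:
a substring starting at `t` of length `w` yields `{i | i < w ∧ S (t+i) = true}`. -/
def subFam (S : ℕ → Bool) : Set (Set ℕ) :=
  {A | ∃ t w : ℕ, A = {i | i < w ∧ S (t + i) = true}}

/-- The subfamily arising from substrings of a fixed length `w`. -/
def subFamW (S : ℕ → Bool) (w : ℕ) : Set (Set ℕ) :=
  {A | ∃ t : ℕ, A = {i | i < w ∧ S (t + i) = true}}

/-- A family of subsets of `ℕ` shatters a finite set `A`. -/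
def FamShatters (F : Set (Set ℕ)) (A : Finset ℕ) : Prop :=
  ∀ B ⊆ A, ∃ C ∈ F, ∀ i ∈ A, (i ∈ C ↔ i ∈ B)

/-- The VC dimension of a family of subsets of `ℕ`, as an extended natural. -/
noncomputable def vcDimF (F : Set (Set ℕ)) : ℕ∞ :=
  sSup {n : ℕ∞ | ∃ A : Finset ℕ, FamShatters F A ∧ (A.card : ℕ∞) = n}

/-- The VC dimension of a binary string. -/
noncomputable def VCdim (S : ℕ → Bool) : ℕ∞ := vcDimF (subFam S)

/-- The sliding-window VC dimension of a binary string. -/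
noncomputable def SWdim (S : ℕ → Bool) : ℕ∞ := ⨆ w : ℕ, vcDimF (subFamW S w)

/-- The binary digit string of a real number `r`: sign and binary point are ignored,
the integer digits (most significant first) are followed by the fractional digits, and
for dyadic rationals the representation ending in `0*` is chosen. -/
noncomputable def rdigit (r : ℝ) (n : ℕ) : Bool :=
  let x : ℝ := |r|
  let m : ℤ := if x < 1 then 0 else (Nat.log 2 ⌊x⌋₊ + 1 : ℤ)
  decide (⌊x * 2 ^ ((n : ℤ) + 1 - m)⌋ % 2 = 1)

/-- The VC dimension of a real number: the VC dimension of its binary digit string. -/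
noncomputable def VCdimR (r : ℝ) : ℕ∞ := VCdim (rdigit r)

lemma vcDimF_le_iff (F : Set (Set ℕ)) (n : ℕ) :
    vcDimF F ≤ (n : ℕ∞) ↔ ∀ A : Finset ℕ, FamShatters F A → A.card ≤ n := by
  constructor
  · intro h A hA
    have hmem : (A.card : ℕ∞) ∈ {n : ℕ∞ | ∃ A : Finset ℕ, FamShatters F A ∧ (A.card : ℕ∞) = n} := ⟨A, hA, rfl⟩
    have : (A.card : ℕ∞) ≤ n := le_trans (le_sSup hmem) h
    exact_mod_cast this
  · intro h
    apply sSup_le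
    rintro x ⟨A, hA, rfl⟩
    exact_mod_cast h A hA

lemma FamShatters.mono {F : Set (Set ℕ)} {A A' : Finset ℕ} (hsub : A' ⊆ A)
    (h : FamShatters F A) : FamShatters F A' := by
  intro B hB
  obtain ⟨C, hC, hiff⟩ := h B (hB.trans hsub)
  exact ⟨C, hC, fun i hi => hiff i (hsub hi)⟩
noncomputable def gfn (b : ℕ → Bool) (k : ℕ) : ℝ := if b k then ((2:ℝ)⁻¹)^(k+1) else 0

noncomputable def valR (b : ℕ → Bool) : ℝ := ∑' k, gfn b k

lemma gfn_nonneg (b : ℕ → Bool) (k : ℕ) : 0 ≤ gfn b k := by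
  unfold gfn; split <;> positivity

lemma gfn_le (b : ℕ → Bool) (k : ℕ) : gfn b k ≤ ((2:ℝ)⁻¹)^(k+1) := by
  unfold gfn; split
  · exact le_refl _
  · positivity

lemma summable_geom' : Summable (fun k : ℕ => ((2:ℝ)⁻¹)^(k+1)) := by
  apply Summable.comp_injective (summable_geometric_of_lt_one (by norm_num) (by norm_num : (2:ℝ)⁻¹ < 1)) (add_left_injective 1)

lemma summable_gfn (b : ℕ → Bool) : Summable (gfn b) :=
  Summable.of_nonneg_of_le (gfn_nonneg b) (gfn_le b) summable_geom'

lemma tsum_geom' : ∑' k : ℕ, ((2:ℝ)⁻¹)^(k+1) = 1 := by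
  have h : ∀ k : ℕ, ((2:ℝ)⁻¹)^(k+1) = 2⁻¹ * 2⁻¹^k := fun k => by ring
  simp only [h, tsum_mul_left, tsum_geometric_of_lt_one (by norm_num) (by norm_num : (2:ℝ)⁻¹ < 1)]
  norm_num

lemma valR_nonneg (b : ℕ → Bool) : 0 ≤ valR b := tsum_nonneg (gfn_nonneg b)

lemma valR_le_one (b : ℕ → Bool) : valR b ≤ 1 := by
  rw [← tsum_geom']
  exact Summable.tsum_le_tsum (gfn_le b) (summable_gfn b) summable_geom'

lemma valR_split (b : ℕ → Bool) (m : ℕ) :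
    valR b = (∑ k ∈ Finset.range m, gfn b k) + ((2:ℝ)⁻¹)^m * valR (fun j => b (m+j)) := by
  have h := (Summable.sum_add_tsum_nat_add m (summable_gfn b)).symm
  rw [valR, h]
  congr 1
  rw [valR, ← tsum_mul_left]
  congr 1; funext j
  by_cases hb : b (m+j) <;>
    simp [gfn, hb, add_comm j m, pow_add, pow_succ] <;> ring

lemma finsum_geom' (m : ℕ) : (∑ k ∈ Finset.range m, ((2:ℝ)⁻¹)^(k+1)) = 1 - 2⁻¹^m := by
  induction m with
  | zero => simp
  | succ n ih => rw [Finset.sum_range_succ, ih]; ring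

lemma valR_lt_one {b : ℕ → Bool} {k0 : ℕ} (h : b k0 = false) : valR b < 1 := by
  rw [valR_split b (k0+1)]
  have h1 : (∑ k ∈ Finset.range (k0+1), gfn b k) ≤ 1 - 2⁻¹^k0 := by
    rw [Finset.sum_range_succ]
    have : gfn b k0 = 0 := by unfold gfn; simp [h]
    rw [this, add_zero, ← finsum_geom' k0]
    exact Finset.sum_le_sum (fun k _ => gfn_le b k)
  have h2 : ((2:ℝ)⁻¹)^(k0+1) * valR (fun j => b (k0+1+j)) ≤ 2⁻¹^(k0+1) := by
    nlinarith [valR_le_one (fun j => b (k0+1+j)), valR_nonneg (fun j => b (k0+1+j)), pow_pos (by norm_num : (0:ℝ) < 2⁻¹) (k0+1)]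
  have h3 : (0:ℝ) < 2⁻¹^(k0+1) := by positivity
  have h5 : ((2:ℝ)⁻¹)^k0 = 2*2⁻¹^(k0+1) := by rw [pow_succ]; ring
  linarith

def Nb (b : ℕ → Bool) (n : ℕ) : ℕ := ∑ k ∈ Finset.range (n+1), if b k then 2^(n-k) else 0

lemma Nb_cast (b : ℕ → Bool) (n : ℕ) :
    ((Nb b n : ℝ)) = (∑ k ∈ Finset.range (n+1), gfn b k) * 2^(n+1) := by
  rw [Nb, Finset.sum_mul]
  push_cast
  apply Finset.sum_congr rfl
  intro k hk
  have hk' : k < n + 1 := Finset.mem_range.mp hk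
  have hpow : (2:ℝ)^(n+1) = 2^(n-k) * 2^(k+1) := by
    rw [← pow_add]; congr 1; omega
  by_cases hb : b k <;> simp [gfn, hb, hpow] <;> field_simp

lemma Nb_mod_two (b : ℕ → Bool) (n : ℕ) : Nb b n % 2 = if b n then 1 else 0 := by
  rw [Nb, Finset.sum_range_succ]
  have heven : (∑ k ∈ Finset.range n, if b k then 2^(n-k) else 0) % 2 = 0 := by
    rw [Finset.sum_nat_mod]
    have : ∀ k ∈ Finset.range n, (if b k then 2^(n-k) else 0) % 2 = 0 := by
      intro k hk
      have : k < n := Finset.mem_range.mp hk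
      have h2 : 2^(n-k) % 2 = 0 := by
        have : n - k = (n - k - 1) + 1 := by omega
        rw [this, pow_succ, Nat.mul_mod_left]
      by_cases hb : b k <;> simp [hb, h2]
    rw [Finset.sum_congr rfl this]
    simp
  rw [Nat.add_mod, heven, Nat.zero_add]
  by_cases hb : b n <;> simp [hb]

lemma floor_valR (b : ℕ → Bool) (hf : ∀ m, ∃ k, b (k+m) = false) (n : ℕ) :
    ⌊valR b * 2^(n+1)⌋ = (Nb b n : ℤ) := by
  set T := valR (fun j => b (n+1+j)) with hT
  have hx : valR b * 2^(n+1) = (Nb b n : ℝ) + T := by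
    rw [valR_split b (n+1), Nb_cast, add_mul]
    congr 1
    have : ((2:ℝ)⁻¹)^(n+1) * 2^(n+1) = 1 := by
      rw [← mul_pow]; norm_num
    rw [mul_comm (((2:ℝ)⁻¹)^(n+1)) T] at *
    rw [mul_assoc, this, mul_one]
  obtain ⟨k, hk⟩ := hf (n+1)
  have hT0 : 0 ≤ T := valR_nonneg _
  have hT1 : T < 1 := valR_lt_one (show (fun j => b (n+1+j)) k = false by simpa [add_comm] using hk)
  rw [hx]
  have : ((Nb b n : ℝ)) = ((Nb b n : ℤ) : ℝ) := by push_cast; ring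
  rw [this, Int.floor_intCast_add]
  simp [Int.floor_eq_zero_iff, Set.mem_Ico, hT0, hT1]

lemma rdigit_valR (b : ℕ → Bool) (hf : ∀ m, ∃ k, b (k+m) = false) (n : ℕ) :
    rdigit (valR b) n = b n := by
  obtain ⟨k0, hk0⟩ := hf 0
  have hx1 : valR b < 1 := valR_lt_one (show b (k0) = false by simpa using hk0)
  have hx0 : |valR b| = valR b := abs_of_nonneg (valR_nonneg b)
  rw [rdigit]
  simp only [hx0, if_pos hx1]
  have hexp : ((n:ℤ) + 1 - 0) = ((n+1 : ℕ) : ℤ) := by push_cast; ring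
  rw [hexp, zpow_natCast]
  rw [floor_valR b hf n]
  have := Nb_mod_two b n
  by_cases hb : b n
  · simp [hb] at this ⊢
    omega
  · simp [hb] at this ⊢
    omega
noncomputable def mR (x : ℝ) : ℤ := if x < 1 then 0 else (Nat.log 2 ⌊x⌋₊ + 1 : ℤ)

lemma rdigit_eq (r : ℝ) (n : ℕ) :
    rdigit r n = decide (⌊|r| * 2 ^ ((n : ℤ) + 1 - mR |r|)⌋ % 2 = 1) := rfl

lemma lt_two_pow_mR {x : ℝ} (hx : 0 ≤ x) : x < (2:ℝ) ^ (mR x) := by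
  rw [mR]
  split
  · simpa using ‹x < 1›
  · push_neg at *
    have h1 : (1:ℝ) ≤ x := by assumption
    have h2 : ⌊x⌋₊ < 2 ^ (Nat.log 2 ⌊x⌋₊ + 1) := Nat.lt_pow_succ_log_self (by norm_num) _
    have h3 : x < (⌊x⌋₊ : ℝ) + 1 := Nat.lt_floor_add_one x
    have h4 : ((⌊x⌋₊ : ℝ)) + 1 ≤ (2:ℝ) ^ (Nat.log 2 ⌊x⌋₊ + 1) := by
      have : (⌊x⌋₊ + 1 : ℕ) ≤ 2 ^ (Nat.log 2 ⌊x⌋₊ + 1) := h2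
      exact_mod_cast this
    have h5 : ((Nat.log 2 ⌊x⌋₊ + 1 : ℤ)) = ((Nat.log 2 ⌊x⌋₊ + 1 : ℕ) : ℤ) := by push_cast; ring
    rw [h5, zpow_natCast]
    linarith

def recD (S : ℕ → Bool) : ℕ → ℤ
  | 0 => if S 0 then 1 else 0
  | (n+1) => 2 * recD S n + (if S (n+1) then 1 else 0)

lemma floor_recD {x : ℝ} (hx : 0 ≤ x) (n : ℕ) :
    ⌊x * 2 ^ ((n : ℤ) + 1 - mR x)⌋ = recD (rdigit x) n := by
  have habs : |x| = x := abs_of_nonneg hx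
  have hm := lt_two_pow_mR hx
  induction n with
  | zero =>
    have hy0 : (0:ℝ) ≤ x * 2 ^ ((1 : ℤ) - mR x) := by positivity
    have hy2 : x * 2 ^ ((1 : ℤ) - mR x) < 2 := by
      have : x * 2 ^ ((1 : ℤ) - mR x) < (2:ℝ) ^ (mR x) * 2 ^ ((1 : ℤ) - mR x) := by
        apply mul_lt_mul_of_pos_right hm (by positivity)
      calc x * 2 ^ ((1 : ℤ) - mR x) < (2:ℝ) ^ (mR x) * 2 ^ ((1 : ℤ) - mR x) := this
        _ = 2 := by rw [← zpow_add₀ (by norm_num : (2:ℝ) ≠ 0)]; norm_num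
    have hfl0 : (0:ℤ) ≤ ⌊x * 2 ^ ((1 : ℤ) - mR x)⌋ := Int.floor_nonneg.mpr hy0
    have hfl2 : ⌊x * 2 ^ ((1 : ℤ) - mR x)⌋ < 2 := by
      apply Int.floor_lt.mpr; exact_mod_cast hy2
    have hd := rdigit_eq x 0
    rw [habs] at hd
    simp only [Nat.cast_zero, zero_add] at hd
    have hpar : (⌊x * 2 ^ ((1 : ℤ) - mR x)⌋ % 2 = 1) ↔ rdigit x 0 = true := by
      rw [hd]; simp
    rw [recD]
    simp only [Nat.cast_zero, zero_add]
    by_cases hb : rdigit x 0 = true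
    · simp only [hb, iff_true] at hpar; rw [if_pos hb]; omega
    · have hbf : rdigit x 0 = false := by simpa using hb
      simp only [hbf, Bool.false_eq_true, iff_false] at hpar
      rw [if_neg hb]; omega
  | succ n ih =>
    have hmul : x * 2 ^ (((n+1:ℕ):ℤ) + 1 - mR x) = (x * 2 ^ ((n:ℤ)+1-mR x)) * 2 := by
      rw [show ((n+1:ℕ):ℤ) + 1 - mR x = ((n:ℤ)+1-mR x) + 1 by push_cast; ring,
        zpow_add_one₀ (by norm_num : (2:ℝ) ≠ 0)]
      ring
    have hfl : (recD (rdigit x) n : ℝ) ≤ x * 2 ^ ((n:ℤ)+1-mR x) := by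
      rw [← ih]; exact Int.floor_le _
    have hfu : x * 2 ^ ((n:ℤ)+1-mR x) < recD (rdigit x) n + 1 := by
      rw [← ih]; exact Int.lt_floor_add_one _
    have hl : 2 * recD (rdigit x) n ≤ ⌊(x * 2 ^ ((n:ℤ)+1-mR x)) * 2⌋ := by
      apply Int.le_floor.mpr; push_cast; linarith
    have hu : ⌊(x * 2 ^ ((n:ℤ)+1-mR x)) * 2⌋ < 2 * recD (rdigit x) n + 2 := by
      apply Int.floor_lt.mpr; push_cast; linarith
    have hd := rdigit_eq x (n+1)
    rw [habs] at hd
    rw [hmul] at hd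
    have hpar : (⌊(x * 2 ^ ((n:ℤ)+1-mR x)) * 2⌋ % 2 = 1) ↔ rdigit x (n+1) = true := by
      rw [hd]; simp
    rw [recD, hmul]
    by_cases hb : rdigit x (n+1) = true
    · simp only [hb, iff_true] at hpar; rw [if_pos hb]; omega
    · have hbf : rdigit x (n+1) = false := by simpa using hb
      simp only [hbf, Bool.false_eq_true, iff_false] at hpar
      rw [if_neg hb]; omega

lemma eq_of_rdigit_eq {x y : ℝ} (hx : 0 ≤ x) (hy : 0 ≤ y) (hm : mR x = mR y)
    (hd : rdigit x = rdigit y) : x = y := by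
  by_contra hne
  have hδ : 0 < |x - y| := abs_pos.mpr (sub_ne_zero.mpr hne)
  obtain ⟨k, hk⟩ := pow_unbounded_of_one_lt (|x - y|)⁻¹ (one_lt_two (α := ℝ))
  set n : ℕ := (mR x).toNat + k with hn
  set c : ℤ := (n : ℤ) + 1 - mR x with hc
  have hck : (k : ℤ) ≤ c := by
    have : mR x ≤ ((mR x).toNat : ℤ) := Int.self_le_toNat _
    rw [hc, hn]; push_cast; omega
  have h2c : (2:ℝ)^(k:ℤ) ≤ 2^c := zpow_le_zpow_right₀ (by norm_num) hck
  have hfx := floor_recD hx n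
  have hfy := floor_recD hy n
  rw [← hm, ← hd] at hfy
  set N := recD (rdigit x) n with hN
  have hxl : (N:ℝ) ≤ x * 2^c := by rw [← hfx]; exact Int.floor_le _
  have hxu : x * 2^c < N + 1 := by rw [← hfx]; exact Int.lt_floor_add_one _
  have hyl : (N:ℝ) ≤ y * 2^c := by rw [← hfy]; exact Int.floor_le _
  have hyu : y * 2^c < N + 1 := by rw [← hfy]; exact Int.lt_floor_add_one _
  have hlt : |x - y| * 2^c < 1 := by
    have h2cpos : (0:ℝ) < 2^c := by positivity
    have heq : |x - y| * 2^c = |x * 2^c - y * 2^c| := by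
      rw [← sub_mul, abs_mul, abs_of_pos h2cpos]
    rw [heq, abs_sub_lt_iff]
    constructor <;> linarith
  have hge : 1 < |x - y| * 2^c := by
    have h1 : (1:ℝ) < |x - y| * 2^(k:ℤ) := by
      rw [zpow_natCast]
      have := mul_lt_mul_of_pos_left hk hδ
      rwa [mul_inv_cancel₀ (ne_of_gt hδ)] at this
    nlinarith [zpow_pos (by norm_num : (0:ℝ) < 2) c]
  linarith

lemma rdigit_abs (r : ℝ) : rdigit |r| = rdigit r := by
  funext n; simp [rdigit, abs_abs]

lemma fiber_countable (S : ℕ → Bool) : {r : ℝ | rdigit r = S}.Countable := by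
  rw [Set.countable_iff_exists_injOn]
  refine ⟨fun r => Encodable.encode (mR |r|, decide (r < 0)), ?_⟩
  intro r hr r' hr' henc
  have hpair : (mR |r|, decide (r < 0)) = (mR |r'|, decide (r' < 0)) :=
    Encodable.encode_injective henc
  have hm : mR |r| = mR |r'| := congrArg Prod.fst hpair
  have hs : decide (r < 0) = decide (r' < 0) := congrArg Prod.snd hpair
  have hr1 : rdigit r = S := hr
  have hr2 : rdigit r' = S := hr'
  have habs : |r| = |r'| :=
    eq_of_rdigit_eq (abs_nonneg r) (abs_nonneg r') hm
      (by rw [rdigit_abs, rdigit_abs, hr1, hr2])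
  by_cases h : r < 0
  · have h' : r' < 0 := by
      by_contra h'
      simp [h, h'] at hs
    rw [abs_of_neg h, abs_of_neg h'] at habs
    linarith
  · have h' : ¬ r' < 0 := by
      by_contra h'
      simp [h, h'] at hs
    push_neg at h h'
    rwa [abs_of_nonneg h, abs_of_nonneg h'] at habs

lemma countable_pre {T : Set (ℕ → Bool)} (hT : T.Countable) :
    {r : ℝ | rdigit r ∈ T}.Countable := by
  have heq : {r : ℝ | rdigit r ∈ T} = ⋃ S ∈ T, {r : ℝ | rdigit r = S} := by
    ext r
    simp only [Set.mem_setOf_eq, Set.mem_iUnion]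
    exact ⟨fun h => ⟨_, h, rfl⟩, fun ⟨S, hS, he⟩ => he ▸ hS⟩
  rw [heq]
  exact hT.biUnion (fun S _ => fiber_countable S)
lemma key_pair {S : ℕ → Bool} (h1 : VCdim S ≤ 1) {i j t : ℕ} (hij : i < j)
    (hp : ∃ p, i ≤ p ∧ S p = true)
    (h11 : ∃ t', S (t' + i) = true ∧ S (t' + j) = true)
    (hj : S (t + j) = true) : S (t + i) = true := by
  by_contra hti
  have hti' : S (t + i) = false := by simpa using hti
  obtain ⟨p, hip, hSp⟩ := hp
  obtain ⟨t', ht'i, ht'j⟩ := h11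
  have hsh : FamShatters (subFam S) {i, j} := by
    intro B hB
    by_cases hiB : i ∈ B <;> by_cases hjB : j ∈ B
    · refine ⟨{x | x < j + 1 ∧ S (t' + x) = true}, ⟨t', j + 1, rfl⟩, ?_⟩
      intro x hx
      rcases Finset.mem_insert.mp hx with rfl | hx
      · simp [Set.mem_setOf_eq, hij, ht'i, hiB]; omega
      · rcases Finset.mem_singleton.mp hx with rfl
        simp [Set.mem_setOf_eq, ht'j, hjB]
    · refine ⟨{x | x < i + 1 ∧ S (p - i + x) = true}, ⟨p - i, i + 1, rfl⟩, ?_⟩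
      intro x hx
      have hpi : p - i + i = p := by omega
      rcases Finset.mem_insert.mp hx with rfl | hx
      · simp [Set.mem_setOf_eq, hpi, hSp, hiB]
      · rcases Finset.mem_singleton.mp hx with rfl
        simp [Set.mem_setOf_eq, hjB]; omega
    · refine ⟨{x | x < j + 1 ∧ S (t + x) = true}, ⟨t, j + 1, rfl⟩, ?_⟩
      intro x hx
      rcases Finset.mem_insert.mp hx with rfl | hx
      · simp [Set.mem_setOf_eq, hti', hiB]
      · rcases Finset.mem_singleton.mp hx with rfl
        simp [Set.mem_setOf_eq, hj, hjB]
    · refine ⟨{x | x < 0 ∧ S (0 + x) = true}, ⟨0, 0, rfl⟩, ?_⟩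
      intro x hx
      rcases Finset.mem_insert.mp hx with rfl | hx
      · simp [Set.mem_setOf_eq, hiB]
      · rcases Finset.mem_singleton.mp hx with rfl
        simp [Set.mem_setOf_eq, hjB]
  have hcard : ({i, j} : Finset ℕ).card = 2 := by
    rw [Finset.card_insert_of_notMem (by simp [hij.ne]), Finset.card_singleton]
  have := (vcDimF_le_iff (subFam S) 1).mp h1 {i, j} hsh
  omega

lemma classification {S : ℕ → Bool} (h1 : VCdim S ≤ 1) :
    {n | S n = true}.Finite ∨ ∃ p g : ℕ, 0 < g ∧ {n | S n = true} = {n | ∃ k, n = p + k * g} := by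
  by_cases hfin : {n | S n = true}.Finite
  · exact Or.inl hfin
  right
  have hinf : {n | S n = true}.Infinite := hfin
  have h0 : ∃ n, S n = true := by
    obtain ⟨n, hn⟩ := hinf.nonempty
    exact ⟨n, hn⟩
  set p := Nat.find h0 with hp
  have hSp : S p = true := Nat.find_spec h0
  have hpmin : ∀ n, S n = true → p ≤ n := fun n hn => Nat.find_min' h0 hn
  have hq0 : ∃ n, p < n ∧ S n = true := by
    obtain ⟨n, hn, hpn⟩ := hinf.exists_gt p
    exact ⟨n, hpn, hn⟩
  set q := Nat.find hq0 with hq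
  obtain ⟨hpq, hSq⟩ : p < q ∧ S q = true := Nat.find_spec hq0
  have hqmin : ∀ n, n < q → ¬(p < n ∧ S n = true) := fun n hn => Nat.find_min hq0 hn
  set g := q - p with hg
  have hgpos : 0 < g := by omega
  have hpg : p + g = q := by omega
  have step1 : ∀ w, S w = true → g ≤ w → S (w - g) = true := by
    intro w hw hgw
    have := key_pair h1 (i := 0) (j := g) (t := w - g) hgpos
      ⟨p, Nat.zero_le p, hSp⟩
      ⟨p, by simpa using hSp, by rw [hpg]; exact hSq⟩
      (by rw [Nat.sub_add_cancel hgw]; exact hw)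
    simpa using this
  have step2 : ∀ w, S w = true → ∃ k, w = p + k * g := by
    intro w
    induction w using Nat.strong_induction_on with
    | _ w ih =>
      intro hw
      by_cases hcase : g ≤ w
      · obtain ⟨k, hk⟩ := ih (w - g) (by omega) (step1 w hw hcase)
        exact ⟨k + 1, by rw [add_mul, one_mul]; omega⟩
      · refine ⟨0, ?_⟩
        simp only [Nat.zero_mul, Nat.add_zero]
        have hwp : p ≤ w := hpmin w hw
        by_contra hne
        have hplt : p < w := by omega
        have hwq : w < q := by omega
        exact hqmin w hwq ⟨hplt, hw⟩
  have step3b : ∀ k, S (p + (k + 1) * g) = true → S (p + k * g) = true := by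
    intro k hk
    have hge : g ≤ p + (k + 1) * g := by nlinarith
    have := step1 _ hk hge
    have heq : p + (k + 1) * g - g = p + k * g := by rw [add_mul, one_mul]; omega
    rwa [heq] at this
  have step3c : ∀ j k, S (p + (k + j) * g) = true → S (p + k * g) = true := by
    intro j
    induction j with
    | zero => intro k hk; simpa using hk
    | succ n ihn =>
      intro k hk
      apply ihn
      apply step3b
      have : k + n + 1 = k + (n + 1) := by omega
      rwa [this]
  have step3 : ∀ k, S (p + k * g) = true := by
    intro k
    obtain ⟨w, hwO, hwgt⟩ := hinf.exists_gt (p + k * g)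
    obtain ⟨k', hk'⟩ := step2 w hwO
    have hkk' : k ≤ k' := by
      by_contra hlt
      push_neg at hlt
      have : k' * g ≤ k * g := Nat.mul_le_mul_right g (by omega)
      omega
    have := step3c (k' - k) k (by rw [show k + (k' - k) = k' by omega]; rw [← hk']; exact hwO)
    exact this
  refine ⟨p, g, hgpos, ?_⟩
  ext n
  simp only [Set.mem_setOf_eq]
  exact ⟨step2 n, fun ⟨k, hk⟩ => hk ▸ step3 k⟩

lemma sidon_pow2 {a b c d : ℕ} (hab : a < b) (hcd : c < d)
    (h : 2 ^ b + 2 ^ c = 2 ^ d + 2 ^ a) : b = d ∧ a = c := by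
  rcases lt_trichotomy b d with h1 | h1 | h1
  · exfalso
    have hb : (2:ℕ) ^ b ≤ 2 ^ (d - 1) := Nat.pow_le_pow_right (by norm_num) (by omega)
    have hc : (2:ℕ) ^ c ≤ 2 ^ (d - 1) := Nat.pow_le_pow_right (by norm_num) (by omega)
    have hd2 : (2:ℕ) ^ d = 2 ^ (d - 1) * 2 := by rw [← pow_succ]; congr 1; omega
    have ha : 0 < 2 ^ a := Nat.pow_pos (by norm_num)
    omega
  · refine ⟨h1, ?_⟩
    rw [h1] at h
    have : (2:ℕ) ^ c = 2 ^ a := by omega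
    have := Nat.pow_right_injective (le_refl 2) this
    omega
  · exfalso
    have hb : (2:ℕ) ^ d ≤ 2 ^ (b - 1) := Nat.pow_le_pow_right (by norm_num) (by omega)
    have hc : (2:ℕ) ^ a ≤ 2 ^ (b - 1) := Nat.pow_le_pow_right (by norm_num) (by omega)
    have hd2 : (2:ℕ) ^ b = 2 ^ (b - 1) * 2 := by rw [← pow_succ]; congr 1; omega
    have ha : 0 < 2 ^ c := Nat.pow_pos (by norm_num)
    omega

lemma pow2_lt_iff {a b : ℕ} (h : (2:ℕ) ^ a < 2 ^ b) : a < b :=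
  (Nat.pow_lt_pow_iff_right (by norm_num)).mp h

lemma no3_sidon {S : ℕ → Bool} {A : Set ℕ}
    (hS : ∀ n, S n = true ↔ ∃ i ∈ A, n = 2 ^ i)
    {i j k : ℕ} (hij : i < j) (hjk : j < k) :
    ¬ FamShatters (subFam S) {i, j, k} := by
  intro hsh
  have hiio : i ∈ ({i, j, k} : Finset ℕ) := by simp
  have hjio : j ∈ ({i, j, k} : Finset ℕ) := by simp
  have hkio : k ∈ ({i, j, k} : Finset ℕ) := by simp
  -- pattern B = {i, j, k}
  obtain ⟨C, ⟨t, w, rfl⟩, hC⟩ := hsh {i, j, k} (le_refl _)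
  have hti : S (t + i) = true := by
    have := (hC i hiio).mpr (by simp)
    exact this.2
  have htj : S (t + j) = true := by
    have := (hC j hjio).mpr (by simp)
    exact this.2
  have htk : S (t + k) = true := by
    have := (hC k hkio).mpr (by simp)
    exact this.2
  have hkw : k < w := by
    have := (hC k hkio).mpr (by simp)
    exact this.1
  -- pattern B = {j, k}
  obtain ⟨C', ⟨t', w', rfl⟩, hC'⟩ := hsh {j, k} (by intro x hx; simp at hx ⊢; tauto)
  have ht'j : S (t' + j) = true := by
    have := (hC' j hjio).mpr (by simp)
    exact this.2
  have ht'k : S (t' + k) = true := by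
    have := (hC' k hkio).mpr (by simp)
    exact this.2
  have hjw' : j < w' := by
    have := (hC' j hjio).mpr (by simp)
    exact this.1
  have ht'i : ¬ (i < w' ∧ S (t' + i) = true) := by
    intro hcon
    have := (hC' i hiio).mp hcon
    simp at this
    omega
  have hiw' : i < w' := by omega
  have ht'if : S (t' + i) ≠ true := fun hc => ht'i ⟨hiw', hc⟩
  -- extract powers of two
  obtain ⟨b, hbA, hb⟩ := (hS (t + j)).mp htj
  obtain ⟨c, hcA, hc⟩ := (hS (t + k)).mp htk
  obtain ⟨b', hb'A, hb'⟩ := (hS (t' + j)).mp ht'j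
  obtain ⟨c', hc'A, hc'⟩ := (hS (t' + k)).mp ht'k
  have hbc : b < c := pow2_lt_iff (by omega)
  have hbc' : b' < c' := pow2_lt_iff (by omega)
  have heq : 2 ^ c + 2 ^ b' = 2 ^ c' + 2 ^ b := by omega
  obtain ⟨hcc', hbb'⟩ := sidon_pow2 hbc hbc' heq
  have htt' : t = t' := by
    rw [hbb'] at hb
    omega
  rw [← htt'] at ht'if
  exact ht'if hti

lemma vcdim_le_two_of_sidon {S : ℕ → Bool} {A : Set ℕ}
    (hS : ∀ n, S n = true ↔ ∃ i ∈ A, n = 2 ^ i) : VCdim S ≤ 2 := by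
  rw [VCdim, show ((2:ℕ∞)) = ((2:ℕ) : ℕ∞) by rfl, vcDimF_le_iff]
  intro A' hsh
  by_contra hcard
  push_neg at hcard
  have hne : A'.Nonempty := Finset.card_pos.mp (by omega)
  set i := A'.min' hne with hi
  set k := A'.max' hne with hk
  have hik : i ∈ A' := A'.min'_mem hne
  have hkk : k ∈ A' := A'.max'_mem hne
  have hsd : (A' \ {i, k}).Nonempty := by
    rw [← Finset.card_pos]
    have h1 : A'.card - ({i, k} : Finset ℕ).card ≤ (A' \ ({i, k} : Finset ℕ)).card :=
      Finset.le_card_sdiff _ _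
    have h2 : ({i, k} : Finset ℕ).card ≤ 2 := Finset.card_insert_le _ _ |>.trans (by simp)
    omega
  obtain ⟨j, hj⟩ := hsd
  rw [Finset.mem_sdiff] at hj
  obtain ⟨hjA, hjik⟩ := hj
  simp at hjik
  have hij : i < j := lt_of_le_of_ne (A'.min'_le j hjA) (Ne.symm hjik.1)
  have hjk : j < k := lt_of_le_of_ne (A'.le_max' j hjA) hjik.2
  have hik2 : i < k := lt_trans hij hjk
  have hsub : ({i, j, k} : Finset ℕ) ⊆ A' := by
    intro x hx
    simp at hx
    rcases hx with rfl | rfl | rfl <;> assumption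
  exact no3_sidon hS hij hjk (FamShatters.mono hsub hsh)

noncomputable def sidonStr (A : Set ℕ) : ℕ → Bool :=
  fun n => @decide (∃ i ∈ A, n = 2 ^ i) (Classical.propDecidable _)

lemma sidonStr_spec (A : Set ℕ) (n : ℕ) : sidonStr A n = true ↔ ∃ i ∈ A, n = 2 ^ i := by
  simp [sidonStr]

lemma sidonStr_false (A : Set ℕ) (m : ℕ) : ∃ k, sidonStr A (k + m) = false := by
  have hm : m ≤ 2 ^ (m + 1) + 1 := by
    have := Nat.lt_two_pow_self (n := m)
    have h2 : (2:ℕ) ^ m ≤ 2 ^ (m + 1) := Nat.pow_le_pow_right (by norm_num) (by omega)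
    omega
  refine ⟨2 ^ (m + 1) + 1 - m, ?_⟩
  have harg : 2 ^ (m + 1) + 1 - m + m = 2 ^ (m + 1) + 1 := by omega
  rw [harg]
  rw [← Bool.not_eq_true]
  rw [sidonStr_spec]
  rintro ⟨i, _, hi⟩
  rcases i with _ | j
  · have : (0:ℕ) < 2 ^ (m + 1) := Nat.pow_pos (by norm_num)
    simp at hi
  · have h1 : (2:ℕ) ^ (j + 1) = 2 * 2 ^ j := by rw [pow_succ]; ring
    have h2 : (2:ℕ) ^ (m + 1) = 2 * 2 ^ m := by rw [pow_succ]; ring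
    omega

lemma sidonStr_mem_iff (A : Set ℕ) (i : ℕ) : i ∈ A ↔ sidonStr A (2 ^ i) = true := by
  rw [sidonStr_spec]
  constructor
  · intro h; exact ⟨i, h, rfl⟩
  · rintro ⟨i', hi', he⟩
    rwa [Nat.pow_right_injective (le_refl 2) he]

lemma sidonStr_inj : Function.Injective (fun A : Set ℕ => valR (sidonStr A)) := by
  intro A A' h
  have hd : ∀ n, sidonStr A n = sidonStr A' n := by
    intro n
    rw [← rdigit_valR _ (sidonStr_false A) n, ← rdigit_valR _ (sidonStr_false A') n]
    simp only at h
    rw [h]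
  ext i
  rw [sidonStr_mem_iff, sidonStr_mem_iff, hd]

lemma stringT_countable :
    {S : ℕ → Bool | {n | S n = true}.Finite ∨
      ∃ p g : ℕ, 0 < g ∧ {n | S n = true} = {n | ∃ k, n = p + k * g}}.Countable := by
  have hinj : Function.Injective (fun S : ℕ → Bool => {n | S n = true}) := by
    intro S S' h
    funext n
    have := Set.ext_iff.mp h n
    simp only [Set.mem_setOf_eq] at this
    cases hb : S n <;> cases hb' : S' n <;> simp_all
  have hU : ({s : Set ℕ | s.Finite} ∪
      {s : Set ℕ | ∃ p g : ℕ, 0 < g ∧ s = {n | ∃ k, n = p + k * g}}).Countable := by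
    apply Set.Countable.union
    · have he : {s : Set ℕ | s.Finite} = Set.range (fun t : Finset ℕ => (t : Set ℕ)) := by
        ext s
        constructor
        · intro hs; exact ⟨hs.toFinset, hs.coe_toFinset⟩
        · rintro ⟨t, rfl⟩; exact t.finite_toSet
      rw [he]; exact Set.countable_range _
    · apply Set.Countable.mono ?_
        (Set.countable_range (fun pg : ℕ × ℕ => {n | ∃ k, n = pg.1 + k * pg.2}))
      rintro s ⟨p, g, _, rfl⟩
      exact ⟨(p, g), rfl⟩
  have heq : {S : ℕ → Bool | {n | S n = true}.Finite ∨
      ∃ p g : ℕ, 0 < g ∧ {n | S n = true} = {n | ∃ k, n = p + k * g}} =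
      (fun S : ℕ → Bool => {n | S n = true}) ⁻¹' ({s : Set ℕ | s.Finite} ∪
      {s : Set ℕ | ∃ p g : ℕ, 0 < g ∧ s = {n | ∃ k, n = p + k * g}}) := by
    ext S
    simp [Set.mem_union, Set.mem_setOf_eq]
  rw [heq]
  exact hU.preimage hinj

/-- The set of reals of VC dimension at most `d` is uncountable iff
`d ≥ 2`. -/
theorem vcdimR_le_d_uncountable_iff (d : ℕ) :
    ¬ {r : ℝ | VCdimR r ≤ (d : ℕ∞)}.Countable ↔ 2 ≤ d := by
  constructor
  · intro h
    by_contra hd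
    push_neg at hd
    apply h
    apply Set.Countable.mono ?_ (countable_pre stringT_countable)
    intro r hr
    simp only [Set.mem_setOf_eq] at hr ⊢
    have hcast : (d : ℕ∞) ≤ ((1:ℕ) : ℕ∞) := Nat.cast_le.mpr (by omega)
    have h1 : VCdim (rdigit r) ≤ 1 := by
      refine le_trans hr ?_
      simpa using hcast
    exact classification h1
  · intro hd hcount
    have hsub : Set.range (fun A : Set ℕ => valR (sidonStr A)) ⊆
        {r : ℝ | VCdimR r ≤ (d : ℕ∞)} := by
      rintro r ⟨A, rfl⟩
      simp only [Set.mem_setOf_eq]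
      have h2 : VCdimR (valR (sidonStr A)) = VCdim (sidonStr A) := by
        rw [VCdimR]
        congr 1
        funext n
        exact rdigit_valR _ (sidonStr_false A) n
      rw [h2]
      refine le_trans (vcdim_le_two_of_sidon (sidonStr_spec A)) ?_
      have : ((2:ℕ) : ℕ∞) ≤ ((d:ℕ) : ℕ∞) := Nat.cast_le.mpr hd
      simpa using this
    have hrange := hcount.mono hsub
    have hpre := hrange.preimage sidonStr_inj
    have huniv : (fun A : Set ℕ => valR (sidonStr A)) ⁻¹'
        (Set.range (fun A : Set ℕ => valR (sidonStr A))) = Set.univ := by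
      ext A
      simp
    rw [huniv, Set.countable_univ_iff] at hpre
    obtain ⟨f, hf⟩ := exists_injective_nat (Set ℕ)
    exact Function.cantor_injective f hf
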